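/- Let k be a field, A = k[z,w]/(zw), and consider the maps φ: A → A⊕A, φ(a) = (za, wa), and ψ: A⊕A → Ω^1_{A/k}, ψ(f,g) = f·dw + g·dz. Then the sequence 0 → A → A⊕A → Ω^1_{A/k} → 0 is exact. -/

import Mathlib

set_option synthInstance.maxHeartbeats 1000000
set_option maxHeartbeats 1000000

open MvPolynomial

namespace stmt6

variable (k : Type*) [Field k]

/-- `A = k[z,w]/(zw)`, with `z = X 0`, `w = X 1`. -/
noncomputable abbrev A := MvPolynomial (Fin 2) k ⧸
  Ideal.span {(X 0 * X 1 : MvPolynomial (Fin 2) k)}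

noncomputable def z : A k := Ideal.Quotient.mk _ (X 0)
noncomputable def w : A k := Ideal.Quotient.mk _ (X 1)

/-- `φ : A → A ⊕ A`, `a ↦ (z a, w a)`. -/
noncomputable def φ : A k →ₗ[A k] A k × A k :=
  ((LinearMap.lsmul (A k) (A k)) (z k)).prod ((LinearMap.lsmul (A k) (A k)) (w k))

/-- `ψ : A ⊕ A → Ω¹_{A/k}`, `(f, g) ↦ f·dw + g·dz`. -/
noncomputable def ψ : A k × A k →ₗ[A k] Ω[(A k)⁄k] :=
  (LinearMap.toSpanSingleton (A k) _ ((KaehlerDifferential.D k (A k)) (w k))).coprod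
    (LinearMap.toSpanSingleton (A k) _ ((KaehlerDifferential.D k (A k)) (z k)))

/-! ### Auxiliary material -/

noncomputable def mk' : MvPolynomial (Fin 2) k →+* A k := Ideal.Quotient.mk _

lemma mk'_surj : Function.Surjective (mk' k) := Ideal.Quotient.mk_surjective

lemma z_eq : z k = mk' k (X 0) := rfl
lemma w_eq : w k = mk' k (X 1) := rfl

lemma zw_zero : z k * w k = 0 := by
  rw [z_eq, w_eq, ← map_mul, mk']
  rw [Ideal.Quotient.eq_zero_iff_mem]
  exact Ideal.mem_span_singleton_self _

lemma prime_X0 : Prime (X 0 : MvPolynomial (Fin 2) k) := by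
  rw [← MulEquiv.prime_iff (MvPolynomial.finSuccEquiv k 1).toRingEquiv.toMulEquiv]
  have h : (MvPolynomial.finSuccEquiv k 1).toRingEquiv.toMulEquiv (X 0) = Polynomial.X :=
    MvPolynomial.finSuccEquiv_X_zero
  rw [h]
  exact Polynomial.prime_X

lemma not_X0_dvd_X1 : ¬ (X 0 : MvPolynomial (Fin 2) k) ∣ X 1 := by
  intro h
  have h2 := map_dvd (eval (fun i : Fin 2 => if i = 0 then (0 : k) else 1)) h
  simp at h2

/-- The target module `(A ⊕ A) / A·(z,w)`. -/
noncomputable abbrev Mod := (A k × A k) ⧸ Submodule.span (A k) {(z k, w k)}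

noncomputable def δ₀ (p : MvPolynomial (Fin 2) k) : Mod k :=
  Submodule.Quotient.mk (mk' k (pderiv 1 p), mk' k (pderiv 0 p))

lemma δ₀_add (p q : MvPolynomial (Fin 2) k) : δ₀ k (p + q) = δ₀ k p + δ₀ k q := by
  simp [δ₀, Prod.ext_iff, ← Submodule.Quotient.mk_add, Prod.add_def]

lemma δ₀_zero_of_mem (p : MvPolynomial (Fin 2) k)
    (hp : p ∈ Ideal.span {(X 0 * X 1 : MvPolynomial (Fin 2) k)}) : δ₀ k p = 0 := by
  rw [Ideal.mem_span_singleton] at hp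
  obtain ⟨q, rfl⟩ := hp
  have hzw : mk' k (X 0 * X 1) = 0 := by
    rw [mk', Ideal.Quotient.eq_zero_iff_mem]; exact Ideal.mem_span_singleton_self _
  have e1 : pderiv 1 (X 0 * X 1 * q) = X 0 * q + (X 0 * X 1) * pderiv 1 q := by
    rw [pderiv_mul, pderiv_mul, pderiv_X_self,
      pderiv_X_of_ne (show (0 : Fin 2) ≠ 1 by decide)]
    ring
  have e0 : pderiv 0 (X 0 * X 1 * q) = X 1 * q + (X 0 * X 1) * pderiv 0 q := by
    rw [pderiv_mul, pderiv_mul, pderiv_X_self,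
      pderiv_X_of_ne (show (1 : Fin 2) ≠ 0 by decide)]
    ring
  have h1 : mk' k (pderiv 1 (X 0 * X 1 * q)) = z k * mk' k q := by
    rw [e1, map_add, map_mul, map_mul, hzw, zero_mul, add_zero, z_eq]
  have h0 : mk' k (pderiv 0 (X 0 * X 1 * q)) = w k * mk' k q := by
    rw [e0, map_add, map_mul, map_mul, hzw, zero_mul, add_zero, w_eq]
  rw [δ₀, h1, h0, Submodule.Quotient.mk_eq_zero]
  have : (z k * mk' k q, w k * mk' k q) = (mk' k q) • (z k, w k) := by
    simp [Prod.smul_def, smul_eq_mul, mul_comm]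
  rw [this]
  exact Submodule.smul_mem _ _ (Submodule.mem_span_singleton_self _)

lemma δ₀_well (p q : MvPolynomial (Fin 2) k) (h : mk' k p = mk' k q) :
    δ₀ k p = δ₀ k q := by
  have : mk' k (p - q) = 0 := by rw [map_sub, h, sub_self]
  rw [mk', Ideal.Quotient.eq_zero_iff_mem] at this
  have h0 := δ₀_zero_of_mem k _ this
  have : δ₀ k p = δ₀ k (q + (p - q)) := by ring_nf
  rw [this, δ₀_add, h0, add_zero]

noncomputable def δf (a : A k) : Mod k := δ₀ k (mk'_surj k a).choose

lemma δf_mk (p : MvPolynomial (Fin 2) k) : δf k (mk' k p) = δ₀ k p :=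
  δ₀_well k _ _ ((mk'_surj k (mk' k p)).choose_spec)

noncomputable def δ : Derivation k (A k) (Mod k) where
  toFun := δf k
  map_add' a b := by
    obtain ⟨p, rfl⟩ := mk'_surj k a
    obtain ⟨q, rfl⟩ := mk'_surj k b
    rw [← map_add, δf_mk, δf_mk, δf_mk, δ₀_add]
  map_smul' c a := by
    obtain ⟨p, rfl⟩ := mk'_surj k a
    show δf k (c • mk' k p) = (RingHom.id k) c • δf k (mk' k p)
    have h1 : c • mk' k p = mk' k (C c * p) := by
      rw [algebra_compatible_smul (A k) c (mk' k p), smul_eq_mul, map_mul]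
      congr 1
    rw [h1, δf_mk, δf_mk]
    have h2 : δ₀ k (C c * p) = mk' k (C c) • δ₀ k p := by
      simp only [δ₀]
      rw [← Submodule.Quotient.mk_smul]
      congr 1
      simp [pderiv_C_mul, map_mul, Prod.smul_def, smul_eq_mul]
    rw [h2]
    rw [RingHom.id_apply]
    rw [← algebraMap_smul (A k) c (δ₀ k p)]
    congr 1
  map_one_eq_zero' := by
    show δf k 1 = 0
    have : (1 : A k) = mk' k 1 := rfl
    rw [this, δf_mk]
    simp [δ₀]
    exact Submodule.zero_mem _
  leibniz' a b := by
    obtain ⟨p, rfl⟩ := mk'_surj k a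
    obtain ⟨q, rfl⟩ := mk'_surj k b
    show δf k (mk' k p * mk' k q) = mk' k p • δf k (mk' k q) + mk' k q • δf k (mk' k p)
    rw [← map_mul, δf_mk, δf_mk, δf_mk]
    simp only [δ₀, pderiv_mul, map_add, map_mul]
    rw [← Submodule.Quotient.mk_smul, ← Submodule.Quotient.mk_smul,
      ← Submodule.Quotient.mk_add]
    congr 1
    simp [Prod.smul_def, smul_eq_mul, Prod.add_def, Prod.ext_iff]
    constructor <;> ring

lemma δ_z : δ k (z k) = Submodule.Quotient.mk (0, 1) := by
  show δf k (mk' k (X 0)) = _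
  rw [δf_mk]
  simp [δ₀]

lemma δ_w : δ k (w k) = Submodule.Quotient.mk (1, 0) := by
  show δf k (mk' k (X 1)) = _
  rw [δf_mk]
  simp [δ₀]

/-- for `A = k[z,w]/(zw)` the sequence
`0 → A --φ--> A ⊕ A --ψ--> Ω¹_{A/k} → 0`, with `φ(a) = (za, wa)` and
`ψ(f,g) = f·dw + g·dz`, is exact. -/
theorem stmt6 :
    Function.Injective (φ k) ∧ LinearMap.range (φ k) = LinearMap.ker (ψ k) ∧
      Function.Surjective (ψ k) := by
  have hX0 : (X 0 : MvPolynomial (Fin 2) k) ≠ 0 := X_ne_zero _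
  have hX1 : (X 1 : MvPolynomial (Fin 2) k) ≠ 0 := X_ne_zero _
  refine ⟨?_, ?_, ?_⟩
  · -- injectivity
    rw [← LinearMap.ker_eq_bot, eq_bot_iff]
    rintro a ha
    obtain ⟨p, rfl⟩ := mk'_surj k a
    simp only [LinearMap.mem_ker, φ, LinearMap.prod_apply, Function.prod, LinearMap.lsmul_apply,
      smul_eq_mul, Prod.mk_eq_zero] at ha
    obtain ⟨h1, h2⟩ := ha
    rw [z_eq, ← map_mul, mk', Ideal.Quotient.eq_zero_iff_mem, Ideal.mem_span_singleton] at h1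
    rw [w_eq, ← map_mul, mk', Ideal.Quotient.eq_zero_iff_mem, Ideal.mem_span_singleton] at h2
    obtain ⟨q, hq⟩ := h1
    obtain ⟨r, hr⟩ := h2
    rw [mul_assoc] at hq
    have hpq : p = X 1 * q := mul_left_cancel₀ hX0 hq
    have hr' : X 1 * p = X 1 * (X 0 * r) := by rw [hr]; ring
    have hpr : p = X 0 * r := mul_left_cancel₀ hX1 hr'
    have hdvd : (X 0 : MvPolynomial (Fin 2) k) ∣ X 1 * q := ⟨r, by rw [← hpq, hpr]⟩
    rcases (prime_X0 k).2.2 _ _ hdvd with h | h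
    · exact absurd h (not_X0_dvd_X1 k)
    · obtain ⟨s, rfl⟩ := h
      simp only [Submodule.mem_bot]
      rw [mk', Ideal.Quotient.eq_zero_iff_mem, Ideal.mem_span_singleton]
      exact ⟨s, by rw [hpq]; ring⟩
  · -- exactness in the middle
    apply le_antisymm
    · rintro _ ⟨a, rfl⟩
      simp only [LinearMap.mem_ker, ψ, φ, LinearMap.prod_apply, Function.prod,
        LinearMap.lsmul_apply, smul_eq_mul, LinearMap.coprod_apply,
        LinearMap.toSpanSingleton_apply]
      have : (z k * a) • (KaehlerDifferential.D k (A k)) (w k) +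
          (w k * a) • (KaehlerDifferential.D k (A k)) (z k) =
          a • ((KaehlerDifferential.D k (A k)) (z k * w k)) := by
        rw [Derivation.leibniz]
        rw [smul_add (M := A k) (A := Ω[(A k)⁄k]), smul_smul, smul_smul]
        ring_nf
      rw [this, zw_zero, map_zero, smul_zero]
    · rintro ⟨f, g⟩ hfg
      simp only [LinearMap.mem_ker, ψ, LinearMap.coprod_apply,
        LinearMap.toSpanSingleton_apply] at hfg
      have := congrArg ((δ k).liftKaehlerDifferential) hfg
      rw [map_add, map_zero, LinearMap.map_smul, LinearMap.map_smul,
        Derivation.liftKaehlerDifferential_comp_D,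
        Derivation.liftKaehlerDifferential_comp_D, δ_z, δ_w,
        ← Submodule.Quotient.mk_smul, ← Submodule.Quotient.mk_smul,
        ← Submodule.Quotient.mk_add] at this
      have h2 : (f • ((1 : A k), (0 : A k)) + g • ((0 : A k), (1 : A k))) = (f, g) := by
        simp [Prod.smul_def, Prod.add_def]
      rw [h2, Submodule.Quotient.mk_eq_zero, Submodule.mem_span_singleton] at this
      obtain ⟨a, ha⟩ := this
      refine ⟨a, ?_⟩
      simp only [φ, LinearMap.prod_apply, Function.prod, LinearMap.lsmul_apply, smul_eq_mul]
      rw [← ha]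
      simp [Prod.smul_def, smul_eq_mul, mul_comm]
  · -- surjectivity
    rw [← LinearMap.range_eq_top, eq_top_iff,
      ← KaehlerDifferential.span_range_derivation k (A k), Submodule.span_le]
    rintro _ ⟨a, rfl⟩
    obtain ⟨p, rfl⟩ := mk'_surj k a
    induction p using MvPolynomial.induction_on with
    | C c =>
      have : mk' k (C c) = algebraMap k (A k) c := rfl
      rw [this, Derivation.map_algebraMap]
      exact Submodule.zero_mem _
    | add p q hp hq =>
      rw [map_add, map_add]
      exact Submodule.add_mem _ hp hq
    | mul_X p i hp =>
      rw [map_mul, Derivation.leibniz]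
      refine Submodule.add_mem _ (Submodule.smul_mem _ _ ?_) (Submodule.smul_mem _ _ hp)
      fin_cases i
      · exact ⟨(0, 1), by simp [ψ, z_eq]; exact zero_smul (A k) ((KaehlerDifferential.D k (A k)) (w k))⟩
      · exact ⟨(1, 0), by simp [ψ, w_eq]; exact zero_smul (A k) ((KaehlerDifferential.D k (A k)) (z k))⟩

end stmt6
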